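/- arXiv:1803.02673 — 2 statements merged into one kernel-verified Lean document; each statement's English description precedes it below -/
import Mathlib

section
/- For any two density operators ρ_A, ρ_B on ℂ^d, there exists a coupling ρ_{AB} with Tr(P_s ρ_{AB}) ≥ (1 + F(ρ_A, ρ_B)²)/2. -/
open scoped Matrix Kronecker ComplexOrder

noncomputable section

namespace QEMD

variable {m n : Type*} [Fintype m] [Fintype n] [DecidableEq m] [DecidableEq n]

/-- Total square root: the PSD square root if `A` is PSD, else `0`. -/
def msqrt (A : Matrix n n ℂ) : Matrix n n ℂ :=
  letI := Classical.dec A.PosSemidef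
  if h : A.PosSemidef then
    (h.1.eigenvectorUnitary : Matrix n n ℂ) *
      Matrix.diagonal ((↑) ∘ Real.sqrt ∘ h.1.eigenvalues) *
      (star h.1.eigenvectorUnitary : Matrix n n ℂ)
  else 0

/-- Trace norm `‖A‖₁ = Tr √(AᴴA)`. -/
def traceNorm (A : Matrix n n ℂ) : ℝ :=
  ((msqrt (Aᴴ * A)).trace).re

/-- Trace distance `D(ρ,σ) = ½‖ρ-σ‖₁`. -/
def traceDist (ρ σ : Matrix n n ℂ) : ℝ := traceNorm (ρ - σ) / 2

/-- Fidelity `F(ρ,σ) = Tr √(√ρ σ √ρ)`. -/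
def fidelity (ρ σ : Matrix n n ℂ) : ℝ :=
  ((msqrt (msqrt ρ * σ * msqrt ρ)).trace).re

/-- Density matrix predicate. -/
def IsDensity (ρ : Matrix n n ℂ) : Prop := ρ.PosSemidef ∧ ρ.trace = 1

/-- Projector `|v⟩⟨v|` onto a vector. -/
def proj (v : n → ℂ) : Matrix n n ℂ := Matrix.of fun i j => v i * star (v j)

/-- Partial trace over the first (left) factor. -/
def traceLeft (ρ : Matrix (m × n) (m × n) ℂ) : Matrix n n ℂ :=
  Matrix.of fun i j => ∑ k, ρ (k, i) (k, j)

/-- Partial trace over the second (right) factor. -/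
def traceRight (ρ : Matrix (m × n) (m × n) ℂ) : Matrix m m ℂ :=
  Matrix.of fun i j => ∑ k, ρ (i, k) (j, k)

/-- The swap operator `S|αβ⟩ = |βα⟩` on `ℂ^d ⊗ ℂ^d`. -/
def swap (d : ℕ) : Matrix (Fin d × Fin d) (Fin d × Fin d) ℂ :=
  Matrix.of fun p q => if p.1 = q.2 ∧ p.2 = q.1 then 1 else 0

/-- Projection onto the symmetric subspace, `P_s = (I + S)/2`. -/
def Psym (d : ℕ) : Matrix (Fin d × Fin d) (Fin d × Fin d) ℂ := (2:ℂ)⁻¹ • (1 + swap d)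

/-- Projection onto the antisymmetric subspace, `P_as = (I - S)/2`. -/
def Pasym (d : ℕ) : Matrix (Fin d × Fin d) (Fin d × Fin d) ℂ := (2:ℂ)⁻¹ • (1 - swap d)

/-- `ρAB` is a quantum coupling of `ρA` and `ρB`. -/
def IsCoupling (ρAB : Matrix (m × n) (m × n) ℂ) (ρA : Matrix m m ℂ)
    (ρB : Matrix n n ℂ) : Prop :=
  IsDensity ρAB ∧ traceRight ρAB = ρA ∧ traceLeft ρAB = ρB

/-- The maximally entangled vector `|Φ⟩ = (1/√d) ∑ᵢ |i⟩|i⟩`. -/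
def maxEnt (d : ℕ) : Fin d × Fin d → ℂ :=
  fun p => if p.1 = p.2 then ((1 / Real.sqrt d : ℝ) : ℂ) else 0

/-- The PSD square root, in the explicit eigenvector form used by `msqrt`. -/
def _root_.Matrix.PosSemidef.sqrt {A : Matrix n n ℂ} (h : A.PosSemidef) : Matrix n n ℂ :=
  (h.1.eigenvectorUnitary : Matrix n n ℂ) *
    Matrix.diagonal ((↑) ∘ Real.sqrt ∘ h.1.eigenvalues) *
    (star h.1.eigenvectorUnitary : Matrix n n ℂ)

open scoped MatrixOrder in
lemma _root_.Matrix.PosSemidef.sqrt_eq_cfc {A : Matrix n n ℂ} (h : A.PosSemidef) :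
    h.sqrt = CFC.sqrt A := by
  rw [CFC.sqrt_eq_cfc, cfc_nnreal_eq_real _ A (Matrix.nonneg_iff_posSemidef.mpr h), h.1.cfc_eq,
    Matrix.IsHermitian.cfc, Unitary.conjStarAlgAut_apply, Matrix.PosSemidef.sqrt]
  congr 2
  congr 1
  funext i
  simp [Function.comp_apply, Real.coe_sqrt, Real.coe_toNNReal',
    max_eq_left (h.eigenvalues_nonneg i)]

open scoped MatrixOrder in
lemma _root_.Matrix.PosSemidef.posSemidef_sqrt {A : Matrix n n ℂ} (h : A.PosSemidef) :
    h.sqrt.PosSemidef := by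
  rw [h.sqrt_eq_cfc]
  exact Matrix.nonneg_iff_posSemidef.mp (CFC.sqrt_nonneg A)

open scoped MatrixOrder in
lemma _root_.Matrix.PosSemidef.sqrt_mul_self {A : Matrix n n ℂ} (h : A.PosSemidef) :
    h.sqrt * h.sqrt = A := by
  rw [h.sqrt_eq_cfc]
  exact CFC.sqrt_mul_sqrt_self A (Matrix.nonneg_iff_posSemidef.mpr h)

open scoped MatrixOrder in
lemma _root_.Matrix.PosSemidef.eq_sqrt_of_sq_eq {N A : Matrix n n ℂ} (hN : N.PosSemidef)
    (hA : A.PosSemidef) (h : N ^ 2 = A) : N = hA.sqrt := by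
  rw [hA.sqrt_eq_cfc]
  exact ((CFC.sqrt_eq_iff A N (Matrix.nonneg_iff_posSemidef.mpr hA)
    (Matrix.nonneg_iff_posSemidef.mpr hN)).mpr (by rw [← sq]; exact h)).symm

lemma psd_outer (v : n → ℂ) : (Matrix.vecMulVec v (star v)).PosSemidef := by
  rw [Matrix.posSemidef_iff_dotProduct_mulVec]
  constructor
  · ext i j
    simp [Matrix.vecMulVec_apply, Matrix.conjTranspose_apply, mul_comm]
  · intro x
    have h1 : (Matrix.vecMulVec v (star v)) *ᵥ x = fun i => v i * (star v ⬝ᵥ x) := by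
      ext i
      simp [Matrix.mulVec, Matrix.vecMulVec_apply, dotProduct, Finset.mul_sum, mul_assoc]
    rw [h1]
    have h2 : (star x) ⬝ᵥ (fun i => v i * (star v ⬝ᵥ x)) = star (star v ⬝ᵥ x) * (star v ⬝ᵥ x) := by
      simp [dotProduct, Finset.sum_mul, star_sum, mul_comm, mul_left_comm, mul_assoc]
    rw [h2]
    exact star_mul_self_nonneg _

lemma psd_real_smul (c : ℝ) (hc : 0 ≤ c) {A : Matrix n n ℂ} (hA : A.PosSemidef) :
    ((c : ℂ) • A).PosSemidef := by
  rw [Matrix.posSemidef_iff_dotProduct_mulVec]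
  constructor
  · show ((c:ℂ) • A)ᴴ = _
    rw [Matrix.conjTranspose_smul, hA.isHermitian]
    congr 1
    simp
  · intro x
    rw [Matrix.smul_mulVec, dotProduct_smul]
    have := hA.dotProduct_mulVec_nonneg x
    have hc' : (0:ℂ) ≤ (c:ℂ) := Complex.zero_le_real.mpr hc
    simpa using mul_nonneg hc' this

omit [DecidableEq n] in
lemma psd_sum {ι : Type*} (s : Finset ι) (f : ι → Matrix n n ℂ)
    (hf : ∀ i ∈ s, (f i).PosSemidef) : (∑ i ∈ s, f i).PosSemidef := by
  classical
  induction s using Finset.induction_on with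
  | empty => simpa using Matrix.PosSemidef.zero
  | insert _ _ h ih =>
    rw [Finset.sum_insert h]
    exact Matrix.PosSemidef.add (hf _ (Finset.mem_insert_self _ _))
      (ih fun i hi => hf i (Finset.mem_insert_of_mem hi))


lemma fourier_exists (d : ℕ) (hd : d ≠ 0) :
    ∃ Fm : Matrix (Fin d) (Fin d) ℂ, Fmᴴ * Fm = 1 ∧
      ∀ lam : Fin d → ℂ, (∑ j, lam j) = 0 →
        ∀ k, (Fm * Matrix.diagonal lam * Fmᴴ) k k = 0 := by
  set ζ : ℂ := Complex.exp (2 * Real.pi * Complex.I / d) with hζ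
  have hprim : IsPrimitiveRoot ζ d := Complex.isPrimitiveRoot_exp d hd
  have habs : ‖ζ‖ = 1 := by
    rw [hζ]
    have : (2 * Real.pi * Complex.I / d) = ((2 * Real.pi / d : ℝ) : ℂ) * Complex.I := by
      push_cast; ring
    rw [this, Complex.norm_exp_ofReal_mul_I]
  have hζne : ζ ≠ 0 := Complex.exp_ne_zero _
  set s : ℝ := (Real.sqrt d)⁻¹ with hs
  set Fm : Matrix (Fin d) (Fin d) ℂ :=
    Matrix.of (fun k j : Fin d => (s : ℂ) * ζ ^ ((k : ℕ) * (j : ℕ))) with hFm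
  have hFmapp : ∀ k j : Fin d, Fm k j = (s : ℂ) * ζ ^ ((k : ℕ) * (j : ℕ)) := fun k j => rfl
  have hsd : (s:ℂ) * (s:ℂ) = ((d : ℝ)⁻¹ : ℂ) := by
    norm_cast
    rw [hs, ← Real.sqrt_inv]
    exact Real.mul_self_sqrt (by positivity)
  have hzstar : ∀ m : ℕ, ζ ^ m * star (ζ ^ m) = 1 := by
    intro m
    rw [Complex.star_def, Complex.mul_conj]
    norm_cast
    rw [Complex.normSq_eq_norm_sq, norm_pow, habs, one_pow, one_pow]
  have hstarinv : ∀ m : ℕ, star (ζ ^ m) = (ζ ^ m)⁻¹ :=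
    fun m => eq_inv_of_mul_eq_one_left (by rw [mul_comm]; exact hzstar m)
  have hentry : ∀ k j : Fin d, Fm k j * star (Fm k j) = ((d : ℝ)⁻¹ : ℂ) := by
    intro k j
    rw [hFmapp, star_mul', Complex.star_def, Complex.conj_ofReal]
    have e : (s:ℂ) * ζ ^ ((k:ℕ)*(j:ℕ)) * ((s:ℂ) * (starRingEnd ℂ) (ζ ^ ((k:ℕ)*(j:ℕ))))
        = ((s:ℂ) * (s:ℂ)) * (ζ ^ ((k:ℕ)*(j:ℕ)) * star (ζ ^ ((k:ℕ)*(j:ℕ)))) := by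
      rw [Complex.star_def]; ring
    rw [e, hzstar, hsd, mul_one]
  refine ⟨Fm, ?_, ?_⟩
  · -- unitarity
    ext j j'
    rw [Matrix.mul_apply]
    by_cases hjj : j = j'
    · subst hjj
      have hterm : ∀ k : Fin d, Fmᴴ j k * Fm k j = ((d : ℝ)⁻¹ : ℂ) := by
        intro k
        rw [Matrix.conjTranspose_apply, mul_comm]
        exact hentry k j
      rw [Finset.sum_congr rfl fun k _ => hterm k, Finset.sum_const, Finset.card_univ,
        Fintype.card_fin]
      have : (0:ℝ) < d := by positivity
      simp only [Matrix.one_apply_eq, nsmul_eq_mul]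
      push_cast
      field_simp
    · -- off-diagonal
      set m : ℤ := (j' : ℤ) - (j : ℤ) with hm
      have hmne : m ≠ 0 := by
        rw [hm, sub_ne_zero]
        intro h
        exact hjj (Fin.ext (by exact_mod_cast h.symm))
      have hmabs : m.natAbs < d := by
        have h1 : (j : ℕ) < d := j.isLt
        have h2 : (j' : ℕ) < d := j'.isLt
        omega
      set z : ℂ := ζ ^ m with hz
      have hzne1 : z ≠ 1 := by
        intro h
        have h4 := (hprim.zpow_eq_one_iff_dvd m).mp h
        have h5 := Int.eq_zero_of_abs_lt_dvd h4 (by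
          rw [Int.abs_eq_natAbs]
          exact_mod_cast hmabs)
        exact hmne h5
      have hq : ∀ k : Fin d,
          (ζ ^ ((k:ℕ)*(j:ℕ)))⁻¹ * ζ ^ ((k:ℕ)*(j':ℕ)) = z ^ (k : ℕ) := by
        intro k
        rw [inv_mul_eq_div, hz, ← zpow_natCast ζ ((k:ℕ)*(j':ℕ)), ← zpow_natCast ζ ((k:ℕ)*(j:ℕ)),
          ← zpow_sub₀ hζne, ← zpow_natCast (ζ ^ m) (k:ℕ), ← zpow_mul]
        congr 1
        rw [hm]
        push_cast
        ring
      have hterm : ∀ k : Fin d, Fmᴴ j k * Fm k j' = ((d : ℝ)⁻¹ : ℂ) * z ^ (k : ℕ) := by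
        intro k
        rw [Matrix.conjTranspose_apply, hFmapp, hFmapp, star_mul', Complex.star_def,
          Complex.conj_ofReal, ← Complex.star_def, hstarinv]
        have e : (s:ℂ) * (ζ ^ ((k:ℕ)*(j:ℕ)))⁻¹ * ((s:ℂ) * ζ ^ ((k:ℕ)*(j':ℕ)))
            = ((s:ℂ) * (s:ℂ)) * ((ζ ^ ((k:ℕ)*(j:ℕ)))⁻¹ * ζ ^ ((k:ℕ)*(j':ℕ))) := by ring
        rw [e, hq, hsd]
      rw [Finset.sum_congr rfl fun k _ => hterm k, ← Finset.mul_sum]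
      have hgeom : ∑ k : Fin d, z ^ (k : ℕ) = 0 := by
        rw [Fin.sum_univ_eq_sum_range, geom_sum_eq hzne1]
        have hzd : z ^ d = 1 := by
          rw [hz, ← zpow_natCast (ζ ^ m) d, ← zpow_mul, mul_comm, zpow_mul, zpow_natCast,
            hprim.pow_eq_one, one_zpow]
        rw [hzd, sub_self, zero_div]
      rw [hgeom, mul_zero]
      exact (Matrix.one_apply_ne hjj).symm
  · -- diagonal vanishing
    intro lam hlam k
    have e : (Fm * Matrix.diagonal lam * Fmᴴ) k k = ∑ j, lam j * ((d : ℝ)⁻¹ : ℂ) := by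
      rw [Matrix.mul_apply]
      refine Finset.sum_congr rfl fun j _ => ?_
      rw [Matrix.mul_diagonal, Matrix.conjTranspose_apply]
      have e2 : Fm k j * lam j * star (Fm k j) = lam j * (Fm k j * star (Fm k j)) := by ring
      rw [e2, hentry]
    rw [e, ← Finset.sum_mul, hlam, zero_mul]


lemma polar_exists (d : ℕ) (A : Matrix (Fin d) (Fin d) ℂ) :
    ∃ V : Matrix (Fin d) (Fin d) ℂ, Vᴴ * V = 1 ∧
      A = V * (Matrix.posSemidef_conjTranspose_mul_self A).sqrt := by
  have hB : (Aᴴ * A).PosSemidef := Matrix.posSemidef_conjTranspose_mul_self A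
  set h : (Aᴴ * A).IsHermitian := hB.isHermitian with hh
  set U : Matrix (Fin d) (Fin d) ℂ := (h.eigenvectorUnitary : Matrix (Fin d) (Fin d) ℂ) with hU
  have hU1 : Uᴴ * U = 1 := by
    rw [← Matrix.star_eq_conjTranspose]
    exact Unitary.coe_star_mul_self h.eigenvectorUnitary
  have hU2 : U * Uᴴ = 1 := by
    rw [← Matrix.star_eq_conjTranspose]
    exact Unitary.coe_mul_star_self h.eigenvectorUnitary
  set μ : Fin d → ℝ := h.eigenvalues with hμ
  have hμ0 : ∀ i, 0 ≤ μ i := hB.eigenvalues_nonneg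
  set sv : Fin d → ℝ := fun i => Real.sqrt (μ i) with hsv
  have hsv0 : ∀ i, 0 ≤ sv i := fun i => Real.sqrt_nonneg _
  have hsvsq : ∀ i, sv i * sv i = μ i := fun i => Real.mul_self_sqrt (hμ0 i)
  set D : Matrix (Fin d) (Fin d) ℂ := Matrix.diagonal (fun i => (sv i : ℂ)) with hD
  -- diagonalization
  have hdiag : Uᴴ * (Aᴴ * A) * U = Matrix.diagonal (fun i => (μ i : ℂ)) := by
    have e : Aᴴ * A = U * Matrix.diagonal (fun i => (μ i : ℂ)) * Uᴴ := by
      have := h.spectral_theorem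
      rw [Unitary.conjStarAlgAut_apply] at this
      exact this
    rw [e]
    calc Uᴴ * (U * Matrix.diagonal (fun i => (μ i : ℂ)) * Uᴴ) * U
        = (Uᴴ * U) * Matrix.diagonal (fun i => (μ i : ℂ)) * (Uᴴ * U) := by noncomm_ring
      _ = _ := by rw [hU1, one_mul, mul_one]
  set N : Matrix (Fin d) (Fin d) ℂ := U * D * Uᴴ with hN
  have hDpsd : D.PosSemidef :=
    Matrix.PosSemidef.diagonal (Pi.le_def.mpr fun i => Complex.zero_le_real.mpr (hsv0 i))
  have hNpsd : N.PosSemidef := hDpsd.mul_mul_conjTranspose_same U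
  have hNsq : N ^ 2 = Aᴴ * A := by
    have e1 : N ^ 2 = U * (D * (Uᴴ * U) * D) * Uᴴ := by
      rw [pow_two, hN]; noncomm_ring
    rw [e1, hU1, mul_one, Matrix.diagonal_mul_diagonal]
    have e2 : (fun i => (sv i : ℂ) * (sv i : ℂ)) = fun i => (μ i : ℂ) := by
      funext i
      rw [← Complex.ofReal_mul, hsvsq]
    rw [e2]
    calc U * Matrix.diagonal (fun i => (μ i : ℂ)) * Uᴴ
        = U * (Uᴴ * (Aᴴ * A) * U) * Uᴴ := by rw [hdiag]
      _ = (U * Uᴴ) * (Aᴴ * A) * (U * Uᴴ) := by noncomm_ring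
      _ = Aᴴ * A := by rw [hU2, one_mul, mul_one]
  have hsqrtN : N = hB.sqrt := hNpsd.eq_sqrt_of_sq_eq hB hNsq
  -- column facts
  have hAUcol : ∀ i j : Fin d, ((A * U)ᴴ * (A * U)) i j = Matrix.diagonal (fun i => (μ i : ℂ)) i j := by
    intro i j
    rw [Matrix.conjTranspose_mul, ← hdiag]
    rw [show Aᴴ * A = Aᴴ * A from rfl]
    congr 1
    noncomm_ring
  -- vectors in EuclideanSpace
  set v : Fin d → EuclideanSpace ℂ (Fin d) :=
      fun i => WithLp.toLp 2 (fun x => ((sv i)⁻¹ : ℂ) * (A * U) x i) with hv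
  have hinner : ∀ i j : Fin d, (inner ℂ (v i) (v j) : ℂ)
      = ((sv i)⁻¹ : ℂ) * ((sv j)⁻¹ : ℂ) * Matrix.diagonal (fun i => (μ i : ℂ)) i j := by
    intro i j
    rw [PiLp.inner_apply]
    simp only [RCLike.inner_apply']
    have e : ∀ x, (starRingEnd ℂ) (v i x) * (v j x)
        = ((sv i)⁻¹ : ℂ) * ((sv j)⁻¹ : ℂ) * ((starRingEnd ℂ) ((A * U) x i) * (A * U) x j) := by
      intro x
      show (starRingEnd ℂ) (((sv i)⁻¹ : ℂ) * (A * U) x i) * (((sv j)⁻¹ : ℂ) * (A * U) x j) = _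
      simp only [map_mul, map_inv₀, Complex.conj_ofReal]
      ring
    rw [Finset.sum_congr rfl fun x _ => e x, ← Finset.mul_sum, ← hAUcol]
    congr 1
  have hortho : Orthonormal ℂ (Set.restrict {i : Fin d | sv i ≠ 0} v) := by
    rw [orthonormal_iff_ite]
    rintro ⟨i, hi⟩ ⟨j, hj⟩
    show inner ℂ (v i) (v j) = _
    rw [hinner i j]
    by_cases hij : i = j
    · subst hij
      have h1 : ((sv i)⁻¹ : ℂ) * ((sv i)⁻¹ : ℂ) * (μ i : ℂ) = 1 := by
        rw [← hsvsq i]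
        have hne : (sv i : ℂ) ≠ 0 := by
          exact_mod_cast hi
        push_cast
        field_simp
      simp [h1]
    · rw [Matrix.diagonal_apply_ne _ hij, if_neg (by simp [hij])]
      ring
  obtain ⟨b, hb⟩ := hortho.exists_orthonormalBasis_extension_of_card_eq
    (by simp)
  set P : Matrix (Fin d) (Fin d) ℂ := Matrix.of (fun x i => b i x) with hP
  have hPunit : Pᴴ * P = 1 := by
    ext i j
    rw [Matrix.mul_apply]
    have : ∀ x, Pᴴ i x * P x j = (starRingEnd ℂ) (b i x) * (b j x) := by
      intro x
      rw [Matrix.conjTranspose_apply]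
      rfl
    have h2 : (inner ℂ (b i) (b j) : ℂ) = ∑ x, (starRingEnd ℂ) (b i x) * (b j x) := by
      rw [PiLp.inner_apply]
      simp only [RCLike.inner_apply']
    rw [Finset.sum_congr rfl fun x _ => this x, ← h2,
      orthonormal_iff_ite.mp b.orthonormal i j]
    by_cases hij : i = j
    · subst hij; simp
    · simp [hij, Matrix.one_apply_ne hij]
  have hPunit2 : P * Pᴴ = 1 := mul_eq_one_comm.mp hPunit
  -- key: P * D = A * U
  have hPD : P * D = A * U := by
    ext x i
    rw [Matrix.mul_diagonal]
    by_cases hsi : sv i = 0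
    · -- column i of A*U is zero
      have hzero : (A * U) x i = 0 := by
        have hsum : ∑ y, Complex.normSq ((A * U) y i) = μ i := by
          have := hAUcol i i
          rw [Matrix.diagonal_apply_eq, Matrix.mul_apply] at this
          have e : ∀ y, ((A * U)ᴴ) i y * (A * U) y i = (Complex.normSq ((A * U) y i) : ℂ) := by
            intro y
            rw [Matrix.conjTranspose_apply, Complex.star_def, mul_comm, Complex.mul_conj]
          rw [Finset.sum_congr rfl fun y _ => e y] at this
          exact_mod_cast this
        have hμi : μ i = 0 := by rw [← hsvsq i, hsi, mul_zero]
        rw [hμi] at hsum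
        have := (Finset.sum_eq_zero_iff_of_nonneg
          (fun y _ => Complex.normSq_nonneg ((A * U) y i))).mp hsum x (Finset.mem_univ x)
        exact Complex.normSq_eq_zero.mp this
      simp [hzero, hsi]
    · -- b i = v i
      have hbi : b i = v i := hb i hsi
      have : P x i = ((sv i)⁻¹ : ℂ) * (A * U) x i := by
        rw [hP]
        show b i x = _
        rw [hbi]
      rw [this]
      have hne : ((sv i) : ℂ) ≠ 0 := by exact_mod_cast hsi
      field_simp
  refine ⟨P * Uᴴ, ?_, ?_⟩
  · rw [Matrix.conjTranspose_mul, Matrix.conjTranspose_conjTranspose]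
    calc U * Pᴴ * (P * Uᴴ) = U * (Pᴴ * P) * Uᴴ := by noncomm_ring
      _ = 1 := by rw [hPunit, mul_one, hU2]
  · rw [← hsqrtN, hN]
    calc A = A * (U * Uᴴ) := by rw [hU2, mul_one]
      _ = (P * D) * Uᴴ := by rw [hPD, mul_assoc]
      _ = P * Uᴴ * (U * D * Uᴴ) := by
          calc (P * D) * Uᴴ = P * (Uᴴ * U) * D * Uᴴ := by rw [hU1]; noncomm_ring
            _ = P * Uᴴ * (U * D * Uᴴ) := by noncomm_ring


set_option maxHeartbeats 1000000 in
theorem stmt11 (d : ℕ) (ρA ρB : Matrix (Fin d) (Fin d) ℂ)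
    (hA : IsDensity ρA) (hB : IsDensity ρB) :
    ∃ ρAB : Matrix ((Fin d) × (Fin d)) ((Fin d) × (Fin d)) ℂ,
      IsCoupling ρAB ρA ρB ∧
      ((Psym d * ρAB).trace).re ≥ (1 + fidelity ρA ρB ^ 2) / 2 := by
  by_cases hd : d = 0
  · exfalso
    subst hd
    have := hA.2
    simp [Matrix.trace] at this
  have hρA : ρA.PosSemidef := hA.1
  have hρB : ρB.PosSemidef := hB.1
  set sA : Matrix (Fin d) (Fin d) ℂ := hρA.sqrt with hsA
  set sB : Matrix (Fin d) (Fin d) ℂ := hρB.sqrt with hsB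
  have hsAh : sAᴴ = sA := hρA.posSemidef_sqrt.isHermitian
  have hsBh : sBᴴ = sB := hρB.posSemidef_sqrt.isHermitian
  have hsA2 : sA * sA = ρA := hρA.sqrt_mul_self
  have hsB2 : sB * sB = ρB := hρB.sqrt_mul_self
  set Ap : Matrix (Fin d) (Fin d) ℂ := sB * sA with hAp
  obtain ⟨V, hV1, hVA⟩ := polar_exists d Ap
  set N : Matrix (Fin d) (Fin d) ℂ := (Matrix.posSemidef_conjTranspose_mul_self Ap).sqrt with hN
  have hV2 : V * Vᴴ = 1 := mul_eq_one_comm.mp hV1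
  have hNps : N.PosSemidef := (Matrix.posSemidef_conjTranspose_mul_self Ap).posSemidef_sqrt
  have hNh : Nᴴ = N := hNps.isHermitian
  have hsAsB : sA * sB = N * Vᴴ := by
    have e1 : Apᴴ = N * Vᴴ := by rw [hVA, Matrix.conjTranspose_mul, hNh]
    rw [← e1, hAp, Matrix.conjTranspose_mul, hsAh, hsBh]
  have hsABV : sA * sB * V = N := by
    rw [hsAsB, mul_assoc, hV1, mul_one]
  -- fidelity identification
  have hKmat : sA * ρB * sA = Apᴴ * Ap := by
    rw [hAp, Matrix.conjTranspose_mul, hsAh, hsBh, ← hsB2]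
    noncomm_ring
  have hmsA : msqrt ρA = sA := dif_pos hρA
  have hmsK : msqrt (Apᴴ * Ap) = N := dif_pos (Matrix.posSemidef_conjTranspose_mul_self Ap)
  have hFid : fidelity ρA ρB = N.trace.re := by
    rw [fidelity, hmsA, hKmat, hmsK]
  -- zero-diagonal rotation
  set Dl : Matrix (Fin d) (Fin d) ℂ := ρA - Vᴴ * ρB * V with hDl
  have hDlh : Dl.IsHermitian := by
    apply Matrix.IsHermitian.sub hρA.isHermitian
    have e : (Vᴴ * ρB * V)ᴴ = Vᴴ * ρBᴴ * V := by
      rw [Matrix.conjTranspose_mul, Matrix.conjTranspose_mul,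
        Matrix.conjTranspose_conjTranspose, mul_assoc]
    rw [Matrix.IsHermitian, e, hρB.isHermitian]
  have hDltr : Dl.trace = 0 := by
    rw [hDl, Matrix.trace_sub, hA.2, Matrix.trace_mul_cycle, hV2, one_mul, hB.2,
      sub_self]
  set Ud : Matrix (Fin d) (Fin d) ℂ := (hDlh.eigenvectorUnitary : Matrix (Fin d) (Fin d) ℂ)
    with hUd
  have hUd1 : Udᴴ * Ud = 1 := by
    rw [← Matrix.star_eq_conjTranspose]
    exact Unitary.coe_star_mul_self hDlh.eigenvectorUnitary
  have hUd2 : Ud * Udᴴ = 1 := mul_eq_one_comm.mp hUd1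
  set lam : Fin d → ℝ := hDlh.eigenvalues with hlam
  have hdiagDl : Udᴴ * Dl * Ud = Matrix.diagonal (fun i => (lam i : ℂ)) := by
    have e : Dl = Ud * Matrix.diagonal (fun i => (lam i : ℂ)) * Udᴴ := by
      have := hDlh.spectral_theorem
      rw [Unitary.conjStarAlgAut_apply] at this
      exact this
    rw [e]
    calc Udᴴ * (Ud * Matrix.diagonal (fun i => (lam i : ℂ)) * Udᴴ) * Ud
        = (Udᴴ * Ud) * Matrix.diagonal (fun i => (lam i : ℂ)) * (Udᴴ * Ud) := by noncomm_ring
      _ = _ := by rw [hUd1, one_mul, mul_one]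
  have hlamsum : (∑ j, (lam j : ℂ)) = 0 := by
    have e1 : (Matrix.diagonal (fun i => (lam i : ℂ))).trace = ∑ j, (lam j : ℂ) :=
      Matrix.trace_diagonal _
    rw [← e1, ← hdiagDl, Matrix.trace_mul_cycle, hUd2, one_mul, hDltr]
  obtain ⟨Fm, hFm1, hFmdiag⟩ := fourier_exists d hd
  have hFm2 : Fm * Fmᴴ = 1 := mul_eq_one_comm.mp hFm1
  set W : Matrix (Fin d) (Fin d) ℂ := Ud * Fmᴴ with hW
  have hWH : Wᴴ = Fm * Udᴴ := by
    rw [hW, Matrix.conjTranspose_mul, Matrix.conjTranspose_conjTranspose]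
  have hW1 : Wᴴ * W = 1 := by
    rw [hWH, hW]
    calc Fm * Udᴴ * (Ud * Fmᴴ) = Fm * (Udᴴ * Ud) * Fmᴴ := by noncomm_ring
      _ = 1 := by rw [hUd1, mul_one, hFm2]
  have hW2 : W * Wᴴ = 1 := mul_eq_one_comm.mp hW1
  have hdiag0 : ∀ k, (Wᴴ * Dl * W) k k = 0 := by
    intro k
    have e1 : Wᴴ * Dl * W = Fm * (Udᴴ * Dl * Ud) * Fmᴴ := by
      rw [hWH, hW]; noncomm_ring
    rw [e1, hdiagDl]
    exact hFmdiag _ hlamsum k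
  -- the vectors
  set G : Matrix (Fin d) (Fin d) ℂ := sA * W with hG
  set H : Matrix (Fin d) (Fin d) ℂ := sB * (V * W) with hH
  have hGGm : Gᴴ * G = Wᴴ * ρA * W := by
    rw [hG, Matrix.conjTranspose_mul, hsAh, ← hsA2]; noncomm_ring
  have hHHm : Hᴴ * H = Wᴴ * (Vᴴ * ρB * V) * W := by
    rw [hH, Matrix.conjTranspose_mul, Matrix.conjTranspose_mul, hsBh, ← hsB2]; noncomm_ring
  have hGGH : Gᴴ * G - Hᴴ * H = Wᴴ * Dl * W := by
    rw [hGGm, hHHm, hDl]; noncomm_ring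
  have hGHm : Gᴴ * H = Wᴴ * N * W := by
    rw [← hsABV, hG, hH, Matrix.conjTranspose_mul, hsAh]; noncomm_ring
  have hGGr : G * Gᴴ = ρA := by
    rw [hG, Matrix.conjTranspose_mul, hsAh]
    calc sA * W * (Wᴴ * sA) = sA * (W * Wᴴ) * sA := by noncomm_ring
      _ = ρA := by rw [hW2, mul_one, hsA2]
  have hHHr : H * Hᴴ = ρB := by
    rw [hH, Matrix.conjTranspose_mul, Matrix.conjTranspose_mul, hsBh]
    calc sB * (V * W) * (Wᴴ * Vᴴ * sB) = sB * (V * (W * Wᴴ) * Vᴴ) * sB := by noncomm_ring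
      _ = ρB := by rw [hW2, mul_one, hV2, mul_one, hsB2]
  -- diagonal quantities
  set p : Fin d → ℝ := fun k => ∑ j, Complex.normSq (G j k) with hp
  set q : Fin d → ℝ := fun k => ∑ j, Complex.normSq (H j k) with hq
  set t : Fin d → ℂ := fun k => (Gᴴ * H) k k with ht
  set c : Fin d → ℝ := fun k => (p k)⁻¹ with hc
  have hdiagX : ∀ (X : Matrix (Fin d) (Fin d) ℂ) k,
      (Xᴴ * X) k k = ((∑ j, Complex.normSq (X j k) : ℝ) : ℂ) := by
    intro X k
    rw [Matrix.mul_apply]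
    push_cast
    refine Finset.sum_congr rfl fun j _ => ?_
    rw [Matrix.conjTranspose_apply, Complex.star_def, mul_comm, Complex.mul_conj]
  have hp0 : ∀ k, 0 ≤ p k := fun k => Finset.sum_nonneg fun j _ => Complex.normSq_nonneg _
  have hc0 : ∀ k, 0 ≤ c k := fun k => inv_nonneg.mpr (hp0 k)
  have hpq : ∀ k, p k = q k := by
    intro k
    have e1 : (Gᴴ * G) k k - (Hᴴ * H) k k = 0 := by
      have e2 := hdiag0 k
      rw [← hGGH] at e2
      rw [← e2, Matrix.sub_apply]
    rw [hdiagX G k, hdiagX H k] at e1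
    have e3 : ((p k : ℝ) : ℂ) = ((q k : ℝ) : ℂ) := by
      rw [hp, hq]
      exact sub_eq_zero.mp e1
    exact_mod_cast e3
  have hpzero : ∀ k, p k = 0 → ∀ j, G j k = 0 := by
    intro k hk j
    have := (Finset.sum_eq_zero_iff_of_nonneg
      (fun j _ => Complex.normSq_nonneg (G j k))).mp hk j (Finset.mem_univ j)
    exact Complex.normSq_eq_zero.mp this
  have hqzero : ∀ k, p k = 0 → ∀ j, H j k = 0 := by
    intro k hk j
    have hqk : q k = 0 := by rw [← hpq]; exact hk
    have := (Finset.sum_eq_zero_iff_of_nonneg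
      (fun j _ => Complex.normSq_nonneg (H j k))).mp hqk j (Finset.mem_univ j)
    exact Complex.normSq_eq_zero.mp this
  have htk : ∀ k, t k = ∑ a, star (G a k) * H a k := by
    intro k
    rw [ht]
    show (Gᴴ * H) k k = _
    rw [Matrix.mul_apply]
    exact Finset.sum_congr rfl fun a _ => by rw [Matrix.conjTranspose_apply]
  have ht0 : ∀ k, p k = 0 → t k = 0 := by
    intro k hk
    rw [htk]
    refine Finset.sum_eq_zero fun a _ => ?_
    rw [hpzero k hk a]
    simp
  have hsump : ∑ k, (p k : ℂ) = 1 := by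
    have e1 : ∑ k, ((p k : ℝ) : ℂ) = (Gᴴ * G).trace := by
      rw [Matrix.trace]
      exact Finset.sum_congr rfl fun k _ => (hdiagX G k).symm
    rw [e1, Matrix.trace_mul_comm, hGGr, hA.2]
  have hsumpR : ∑ k, p k = 1 := by
    have e2 := hsump
    push_cast at e2
    exact_mod_cast e2
  have hsumt : ∑ k, t k = N.trace := by
    have e1 : ∑ k, t k = (Gᴴ * H).trace := by
      rw [Matrix.trace]
      rfl
    rw [e1, hGHm, Matrix.trace_mul_cycle, hW2, one_mul]
  -- the coupling
  set w : Fin d → (Fin d × Fin d) → ℂ := fun k ab => G ab.1 k * H ab.2 k with hw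
  set ρAB : Matrix (Fin d × Fin d) (Fin d × Fin d) ℂ :=
    ∑ k, (c k : ℂ) • Matrix.vecMulVec (w k) (star (w k)) with hρAB
  have hEntry : ∀ ab cd, ρAB ab cd
      = ∑ k, (c k : ℂ) * ((G ab.1 k * star (G cd.1 k)) * (H ab.2 k * star (H cd.2 k))) := by
    intro ab cd
    rw [hρAB, Matrix.sum_apply]
    refine Finset.sum_congr rfl fun k _ => ?_
    rw [Matrix.smul_apply, Matrix.vecMulVec_apply, Pi.star_apply, hw]
    show (c k : ℂ) * ((G ab.1 k * H ab.2 k) * star (G cd.1 k * H cd.2 k)) = _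
    rw [star_mul']
    ring
  have hql : ∀ k, (∑ b, H b k * star (H b k)) = ((q k : ℝ) : ℂ) := by
    intro k
    rw [hq]
    push_cast
    exact Finset.sum_congr rfl fun b _ => by
      rw [Complex.star_def, Complex.mul_conj]
  have hpl : ∀ k, (∑ a, G a k * star (G a k)) = ((p k : ℝ) : ℂ) := by
    intro k
    rw [hp]
    push_cast
    exact Finset.sum_congr rfl fun b _ => by
      rw [Complex.star_def, Complex.mul_conj]
  have hcq : ∀ k, (c k : ℂ) * (q k : ℂ) = if p k = 0 then 0 else 1 := by
    intro k
    by_cases hk : p k = 0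
    · rw [if_pos hk, ← hpq k, hk, hc]
      simp
    · rw [if_neg hk, hc, ← hpq k]
      push_cast
      rw [inv_mul_cancel₀ (by exact_mod_cast hk)]
  have hcp : ∀ k, (c k : ℂ) * (p k : ℂ) = if p k = 0 then 0 else 1 := by
    intro k
    by_cases hk : p k = 0
    · rw [if_pos hk, hk]
      simp
    · rw [if_neg hk, hc]
      push_cast
      rw [inv_mul_cancel₀ (by exact_mod_cast hk)]
  -- marginals
  have hTR : traceRight ρAB = ρA := by
    ext i j
    show ∑ b, ρAB (i, b) (j, b) = ρA i j
    have e1 : ∀ b, ρAB (i, b) (j, b)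
        = ∑ k, (c k : ℂ) * ((G i k * star (G j k)) * (H b k * star (H b k))) :=
      fun b => hEntry (i, b) (j, b)
    rw [Finset.sum_congr rfl fun b _ => e1 b, Finset.sum_comm]
    have e2 : ∀ k, (∑ b, (c k : ℂ) * ((G i k * star (G j k)) * (H b k * star (H b k))))
        = G i k * star (G j k) := by
      intro k
      have e3 : ∀ b, (c k : ℂ) * ((G i k * star (G j k)) * (H b k * star (H b k)))
          = (H b k * star (H b k)) * ((c k : ℂ) * (G i k * star (G j k))) := fun b => by ring
      rw [Finset.sum_congr rfl fun b _ => e3 b, ← Finset.sum_mul, hql k]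
      by_cases hk : p k = 0
      · rw [hpzero k hk i]
        simp
      · have e4 : ((q k : ℝ) : ℂ) * ((c k : ℂ) * (G i k * star (G j k)))
            = ((c k : ℂ) * (q k : ℂ)) * (G i k * star (G j k)) := by ring
        rw [e4, hcq k, if_neg hk, one_mul]
    rw [Finset.sum_congr rfl fun k _ => e2 k]
    have e5 : ρA i j = (G * Gᴴ) i j := by rw [hGGr]
    rw [e5, Matrix.mul_apply]
    exact Finset.sum_congr rfl fun k _ => by rw [Matrix.conjTranspose_apply]
  have hTL : traceLeft ρAB = ρB := by
    ext i j
    show ∑ a, ρAB (a, i) (a, j) = ρB i j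
    have e1 : ∀ a, ρAB (a, i) (a, j)
        = ∑ k, (c k : ℂ) * ((G a k * star (G a k)) * (H i k * star (H j k))) :=
      fun a => hEntry (a, i) (a, j)
    rw [Finset.sum_congr rfl fun a _ => e1 a, Finset.sum_comm]
    have e2 : ∀ k, (∑ a, (c k : ℂ) * ((G a k * star (G a k)) * (H i k * star (H j k))))
        = H i k * star (H j k) := by
      intro k
      have e3 : ∀ a, (c k : ℂ) * ((G a k * star (G a k)) * (H i k * star (H j k)))
          = (G a k * star (G a k)) * ((c k : ℂ) * (H i k * star (H j k))) := fun a => by ring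
      rw [Finset.sum_congr rfl fun a _ => e3 a, ← Finset.sum_mul, hpl k]
      by_cases hk : p k = 0
      · rw [hqzero k hk i]
        simp
      · have e4 : ((p k : ℝ) : ℂ) * ((c k : ℂ) * (H i k * star (H j k)))
            = ((c k : ℂ) * (p k : ℂ)) * (H i k * star (H j k)) := by ring
        rw [e4, hcp k, if_neg hk, one_mul]
    rw [Finset.sum_congr rfl fun k _ => e2 k]
    have e5 : ρB i j = (H * Hᴴ) i j := by rw [hHHr]
    rw [e5, Matrix.mul_apply]
    exact Finset.sum_congr rfl fun k _ => by rw [Matrix.conjTranspose_apply]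
  -- density
  have hPSD : ρAB.PosSemidef := by
    rw [hρAB]
    exact psd_sum _ _ fun k _ => psd_real_smul (c k) (hc0 k) (psd_outer (w k))
  have houter_tr : ∀ k, (Matrix.vecMulVec (w k) (star (w k))).trace
      = ((p k : ℝ) : ℂ) * ((q k : ℝ) : ℂ) := by
    intro k
    rw [Matrix.trace, ← hpl k, ← hql k, Finset.sum_mul_sum]
    rw [Fintype.sum_prod_type]
    refine Finset.sum_congr rfl fun a _ => Finset.sum_congr rfl fun b _ => ?_
    show Matrix.vecMulVec (w k) (star (w k)) (a, b) (a, b) = _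
    rw [Matrix.vecMulVec_apply, Pi.star_apply, hw]
    show (G a k * H b k) * star (G a k * H b k) = _
    rw [star_mul']
    ring
  have hTrace : ρAB.trace = 1 := by
    rw [hρAB, Matrix.trace_sum]
    have e1 : ∀ k, ((c k : ℂ) • Matrix.vecMulVec (w k) (star (w k))).trace = (p k : ℂ) := by
      intro k
      rw [Matrix.trace_smul, houter_tr k, smul_eq_mul]
      by_cases hk : p k = 0
      · rw [hk]
        simp
      · have e2 : (c k : ℂ) * (((p k : ℝ) : ℂ) * ((q k : ℝ) : ℂ))
            = ((c k : ℂ) * ((q k : ℝ) : ℂ)) * ((p k : ℝ) : ℂ) := by ring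
        rw [e2, hcq k, if_neg hk, one_mul]
    rw [Finset.sum_congr rfl fun k _ => e1 k, hsump]
  -- swap trace
  have hswap_entry : ∀ z : Fin d × Fin d, (swap d * ρAB) z z = ρAB (z.2, z.1) z := by
    intro z
    rw [Matrix.mul_apply]
    rw [Finset.sum_eq_single ((z.2, z.1) : Fin d × Fin d)]
    · have : swap d z (z.2, z.1) = 1 := by
        show (if z.1 = z.1 ∧ z.2 = z.2 then (1:ℂ) else 0) = 1
        simp
      rw [this, one_mul]
    · intro u _ hu
      have : swap d z u = 0 := by
        show (if z.1 = u.2 ∧ z.2 = u.1 then (1:ℂ) else 0) = 0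
        rw [if_neg]
        rintro ⟨e1, e2⟩
        exact hu (by rw [Prod.ext_iff]; exact ⟨e2.symm, e1.symm⟩)
      rw [this, zero_mul]
    · intro hmem
      exact absurd (Finset.mem_univ _) hmem
  set T : ℝ := ∑ k, c k * Complex.normSq (t k) with hT
  have hSwTr : (swap d * ρAB).trace = (T : ℂ) := by
    have htreq : (swap d * ρAB).trace = ∑ z : Fin d × Fin d, (swap d * ρAB) z z := rfl
    rw [htreq]
    have e1 : ∀ z : Fin d × Fin d, (swap d * ρAB) z z
        = ∑ k, (c k : ℂ) * ((star (G z.1 k) * H z.1 k) * (G z.2 k * star (H z.2 k))) := by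
      intro z
      rw [hswap_entry z, hEntry]
      refine Finset.sum_congr rfl fun k _ => ?_
      ring
    rw [Finset.sum_congr rfl fun z _ => e1 z, Finset.sum_comm]
    have e2 : ∀ k, (∑ z : Fin d × Fin d,
        (c k : ℂ) * ((star (G z.1 k) * H z.1 k) * (G z.2 k * star (H z.2 k))))
        = (c k : ℂ) * (t k * star (t k)) := by
      intro k
      rw [Fintype.sum_prod_type]
      have e3 : ∀ a : Fin d, (∑ b, (c k : ℂ) *
          ((star (G a k) * H a k) * (G b k * star (H b k))))
          = ((c k : ℂ) * (star (G a k) * H a k)) * (∑ b, G b k * star (H b k)) := by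
        intro a
        rw [Finset.mul_sum]
        exact Finset.sum_congr rfl fun b _ => by ring
      rw [Finset.sum_congr rfl fun a _ => e3 a, ← Finset.sum_mul]
      have e4 : (∑ a, (c k : ℂ) * (star (G a k) * H a k)) = (c k : ℂ) * t k := by
        rw [← Finset.mul_sum, htk k]
      have e5 : (∑ b, G b k * star (H b k)) = star (t k) := by
        rw [htk k, star_sum]
        exact Finset.sum_congr rfl fun b _ => by rw [star_mul', star_star]
      rw [e4, e5, mul_assoc]
    rw [Finset.sum_congr rfl fun k _ => e2 k, hT]
    push_cast
    refine Finset.sum_congr rfl fun k _ => ?_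
    rw [Complex.star_def, Complex.mul_conj]
  -- value of the objective
  have hVal : ((Psym d * ρAB).trace).re = (1 + T) / 2 := by
    have e1 : Psym d * ρAB = (2:ℂ)⁻¹ • (ρAB + swap d * ρAB) := by
      rw [Psym, Matrix.smul_mul, add_mul, one_mul]
    rw [e1, Matrix.trace_smul, Matrix.trace_add, hTrace, hSwTr, smul_eq_mul]
    have e2 : (2:ℂ)⁻¹ * (1 + (T:ℂ)) = (((1 + T) / 2 : ℝ) : ℂ) := by
      push_cast
      ring
    rw [e2, Complex.ofReal_re]
  -- the Cauchy-Schwarz chain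
  have hF2T : fidelity ρA ρB ^ 2 ≤ T := by
    rw [hFid, ← hsumt]
    have h1 : ((∑ k, t k).re) ^ 2 ≤ (‖∑ k, t k‖) ^ 2 := by
      obtain ⟨ha, hb⟩ := abs_le.mp (Complex.abs_re_le_norm (∑ k, t k))
      exact sq_le_sq' ha hb
    have h2 : ‖∑ k, t k‖ ≤ ∑ k, ‖t k‖ := by
      simpa using norm_sum_le Finset.univ t
    have h3 : (∑ k, ‖t k‖) ^ 2 ≤ T := by
      have hcs := Finset.sum_mul_sq_le_sq_mul_sq Finset.univ
        (fun k => Real.sqrt (p k)) (fun k => Real.sqrt (c k) * ‖t k‖)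
      have hfg : ∀ k, Real.sqrt (p k) * (Real.sqrt (c k) * ‖t k‖)
          = ‖t k‖ := by
        intro k
        by_cases hk : p k = 0
        · rw [ht0 k hk]
          simp
        · rw [hc, Real.sqrt_inv]
          have hsne : Real.sqrt (p k) ≠ 0 := by
            rw [Real.sqrt_ne_zero' ]
            exact lt_of_le_of_ne (hp0 k) (Ne.symm hk)
          field_simp
      have hf2 : ∀ k, Real.sqrt (p k) ^ 2 = p k := fun k => Real.sq_sqrt (hp0 k)
      have hg2 : ∀ k, (Real.sqrt (c k) * ‖t k‖) ^ 2
          = c k * Complex.normSq (t k) := by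
        intro k
        rw [mul_pow, Real.sq_sqrt (hc0 k), Complex.sq_norm]
      rw [Finset.sum_congr rfl fun k _ => hfg k] at hcs
      rw [Finset.sum_congr rfl fun k _ => hf2 k] at hcs
      rw [Finset.sum_congr rfl fun k _ => hg2 k] at hcs
      rw [hsumpR, one_mul] at hcs
      rw [hT]
      exact hcs
    calc ((∑ k, t k).re) ^ 2 ≤ (‖∑ k, t k‖) ^ 2 := h1
      _ ≤ (∑ k, ‖t k‖) ^ 2 :=
          pow_le_pow_left₀ (norm_nonneg _) h2 2
      _ ≤ T := h3
  refine ⟨ρAB, ⟨⟨hPSD, hTrace⟩, hTR, hTL⟩, ?_⟩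
  rw [hVal, ge_iff_le, div_le_div_iff₀ (by norm_num) (by norm_num)]
  nlinarith [hF2T]



end QEMD
end
end

section
/- Let Λ_A = diag(λ_{A,1},…,λ_{A,d}) and Λ_B = diag(λ_{B,1},…,λ_{B,d}) be diagonal density matrices. Then there exists a coupling ρ_{AB} of Λ_A and Λ_B with Tr(P_s ρ_{AB}) ≥ F(Λ_A, Λ_B) + (1/2)·minᵢ(√λ_{A,i} − √λ_{B,i})². -/
open scoped Matrix Kronecker ComplexOrder

noncomputable section

namespace QEMD

variable {m n : Type*} [Fintype m] [Fintype n] [DecidableEq m] [DecidableEq n]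

namespace S12

variable {d : ℕ} (lA lB : Fin d → ℝ)

def pp (i : Fin d) : ℝ := max (lA i - lB i) 0
def qq (i : Fin d) : ℝ := max (lB i - lA i) 0
def mm (i : Fin d) : ℝ := min (lA i) (lB i)
def DD : ℝ := ∑ i, pp lA lB i
def tt (i j : Fin d) : ℝ :=
  min (mm lA lB i * qq lA lB j) (mm lA lB j * pp lA lB i) / DD lA lB
def ff (i j : Fin d) : ℝ := pp lA lB i * qq lA lB j / DD lA lB
def uu (i j : Fin d) : ℝ := Real.sqrt (tt lA lB i j + ff lA lB i j)
def vv (i j : Fin d) : ℝ := Real.sqrt (tt lA lB i j)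
def cc (i : Fin d) : ℝ := mm lA lB i - ∑ j, (tt lA lB i j + tt lA lB j i)
def Bb (i : Fin d) : ℝ := (Real.sqrt (lA i) - Real.sqrt (lB i)) ^ 2
def Bp (i : Fin d) : ℝ :=
  (Real.sqrt (mm lA lB i + pp lA lB i) - Real.sqrt (mm lA lB i)) ^ 2
def Cq (i : Fin d) : ℝ :=
  (Real.sqrt (mm lA lB i + qq lA lB i) - Real.sqrt (mm lA lB i)) ^ 2

def sp (r : ℝ) (P : Fin d × Fin d) : Fin d × Fin d → ℝ := fun p => if p = P then r else 0
def psiR (i : Fin d) : Fin d × Fin d → ℝ := sp (Real.sqrt (cc lA lB i)) (i, i)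
def chiR (i j : Fin d) : Fin d × Fin d → ℝ :=
  fun p => sp (uu lA lB i j) (i, j) p + sp (vv lA lB i j) (j, i) p

def rho : Matrix (Fin d × Fin d) (Fin d × Fin d) ℂ :=
  (∑ a, proj (fun p => ((psiR lA lB a p : ℝ) : ℂ)))
  + ∑ a, ∑ b, proj (fun p => ((chiR lA lB a b p : ℝ) : ℂ))

section scalar

variable (hlA : ∀ i, 0 ≤ lA i) (hlB : ∀ i, 0 ≤ lB i)
  (hsA : ∑ i, lA i = 1) (hsB : ∑ i, lB i = 1)

lemma pp_nonneg (i : Fin d) : 0 ≤ pp lA lB i := le_max_right _ _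
lemma qq_nonneg (i : Fin d) : 0 ≤ qq lA lB i := le_max_right _ _
include hlA hlB in
lemma mm_nonneg (i : Fin d) : 0 ≤ mm lA lB i := le_min (hlA i) (hlB i)
lemma DD_nonneg : 0 ≤ DD lA lB := Finset.sum_nonneg fun i _ => pp_nonneg lA lB i
lemma pp_sub_qq (i : Fin d) : pp lA lB i - qq lA lB i = lA i - lB i := by
  unfold pp qq
  rcases le_total (lA i) (lB i) with h | h
  · rw [max_eq_right (by linarith), max_eq_left (by linarith)]; ring
  · rw [max_eq_left (by linarith), max_eq_right (by linarith)]; ring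
include hsA hsB in
lemma sum_qq : ∑ i, qq lA lB i = DD lA lB := by
  have h : ∑ i, (pp lA lB i - qq lA lB i) = 0 := by
    rw [Finset.sum_congr rfl fun i _ => pp_sub_qq lA lB i, Finset.sum_sub_distrib, hsA, hsB]
    ring
  rw [Finset.sum_sub_distrib] at h
  unfold DD; linarith
lemma pp_mul_qq (i : Fin d) : pp lA lB i * qq lA lB i = 0 := by
  unfold pp qq
  rcases le_total (lA i) (lB i) with h | h
  · rw [max_eq_right (by linarith)]; ring
  · rw [max_eq_right (sub_nonpos.mpr h)]; ring
lemma mm_add_pp (i : Fin d) : mm lA lB i + pp lA lB i = lA i := by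
  unfold mm pp
  rcases le_total (lA i) (lB i) with h | h
  · rw [min_eq_left h, max_eq_right (by linarith)]; ring
  · rw [min_eq_right h, max_eq_left (by linarith)]; ring
lemma mm_add_qq (i : Fin d) : mm lA lB i + qq lA lB i = lB i := by
  unfold mm qq
  rcases le_total (lA i) (lB i) with h | h
  · rw [min_eq_left h, max_eq_left (by linarith)]; ring
  · rw [min_eq_right h, max_eq_right (by linarith)]; ring
include hlA hlB in
lemma tt_nonneg (i j : Fin d) : 0 ≤ tt lA lB i j :=
  div_nonneg (le_min (mul_nonneg (mm_nonneg lA lB hlA hlB i) (qq_nonneg lA lB j))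
    (mul_nonneg (mm_nonneg lA lB hlA hlB j) (pp_nonneg lA lB i))) (DD_nonneg lA lB)
lemma ff_nonneg (i j : Fin d) : 0 ≤ ff lA lB i j :=
  div_nonneg (mul_nonneg (pp_nonneg lA lB i) (qq_nonneg lA lB j)) (DD_nonneg lA lB)
include hlA hlB in
lemma tt_diag (i : Fin d) : tt lA lB i i = 0 := by
  unfold tt
  rcases mul_eq_zero.mp (pp_mul_qq lA lB i) with h | h
  · rw [min_eq_right (by rw [h, mul_zero]; exact mul_nonneg (mm_nonneg lA lB hlA hlB i) (qq_nonneg lA lB i)), h, mul_zero, zero_div]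
  · rw [min_eq_left (by rw [h, mul_zero]; exact mul_nonneg (mm_nonneg lA lB hlA hlB i) (pp_nonneg lA lB i)), h, mul_zero, zero_div]
include hlA hlB in
lemma uu_diag (i : Fin d) : uu lA lB i i = 0 := by
  unfold uu
  rw [tt_diag lA lB hlA hlB i]
  have : ff lA lB i i = 0 := by unfold ff; rw [pp_mul_qq lA lB i, zero_div]
  rw [this, add_zero, Real.sqrt_zero]
include hlA hlB in
lemma vv_diag (i : Fin d) : vv lA lB i i = 0 := by
  unfold vv; rw [tt_diag lA lB hlA hlB i, Real.sqrt_zero]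
include hlA hlB in
lemma uu_sq (i j : Fin d) : uu lA lB i j ^ 2 = tt lA lB i j + ff lA lB i j :=
  Real.sq_sqrt (add_nonneg (tt_nonneg lA lB hlA hlB i j) (ff_nonneg lA lB i j))
include hlA hlB in
lemma vv_sq (i j : Fin d) : vv lA lB i j ^ 2 = tt lA lB i j :=
  Real.sq_sqrt (tt_nonneg lA lB hlA hlB i j)
lemma pp_le_DD (i : Fin d) : pp lA lB i ≤ DD lA lB :=
  Finset.single_le_sum (fun j _ => pp_nonneg lA lB j) (Finset.mem_univ i)
include hsA hsB in
lemma qq_le_DD (i : Fin d) : qq lA lB i ≤ DD lA lB := by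
  rw [← sum_qq lA lB hsA hsB]
  exact Finset.single_le_sum (fun j _ => qq_nonneg lA lB j) (Finset.mem_univ i)
include hsA hsB in
lemma sum_ff_row (i : Fin d) : ∑ j, ff lA lB i j = pp lA lB i := by
  unfold ff
  rcases eq_or_lt_of_le (DD_nonneg lA lB) with h | h
  · have hp : pp lA lB i = 0 :=
      le_antisymm (by rw [h]; exact pp_le_DD lA lB i) (pp_nonneg lA lB i)
    simp [← h, hp]
  · rw [← Finset.sum_div, ← Finset.mul_sum, sum_qq lA lB hsA hsB,
      mul_div_assoc, div_self h.ne', mul_one]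
include hsA hsB in
lemma sum_ff_col (i : Fin d) : ∑ j, ff lA lB j i = qq lA lB i := by
  unfold ff
  rcases eq_or_lt_of_le (DD_nonneg lA lB) with h | h
  · have hq : qq lA lB i = 0 :=
      le_antisymm (by rw [h]; exact qq_le_DD lA lB hsA hsB i) (qq_nonneg lA lB i)
    simp [← h, hq]
  · rw [← Finset.sum_div, ← Finset.sum_mul]
    unfold DD at h ⊢
    rw [mul_comm, mul_div_assoc, div_self h.ne', mul_one]
include hlA hlB in
lemma tt_row_zero (i j : Fin d) (h : pp lA lB i = 0) : tt lA lB i j = 0 := by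
  unfold tt
  rw [h, mul_zero, min_eq_right (mul_nonneg (mm_nonneg lA lB hlA hlB i) (qq_nonneg lA lB j)), zero_div]
include hlA hlB in
lemma tt_col_zero (i j : Fin d) (h : qq lA lB i = 0) : tt lA lB j i = 0 := by
  unfold tt
  rw [h, mul_zero, min_eq_left (mul_nonneg (mm_nonneg lA lB hlA hlB i) (pp_nonneg lA lB j)), zero_div]
include hlA hlB hsA hsB in
lemma sum_tt_le (i : Fin d) : ∑ j, (tt lA lB i j + tt lA lB j i) ≤ mm lA lB i := by
  have hdiv : ∀ x y : ℝ, x ≤ y → x / DD lA lB ≤ y / DD lA lB := by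
    intro x y hxy
    rcases eq_or_lt_of_le (DD_nonneg lA lB) with h | h
    · rw [← h, div_zero, div_zero]
    · exact div_le_div_of_nonneg_right hxy h.le
  rcases mul_eq_zero.mp (pp_mul_qq lA lB i) with h | h
  · have h1 : ∀ j, tt lA lB i j + tt lA lB j i ≤ mm lA lB i * pp lA lB j / DD lA lB := by
      intro j
      rw [tt_row_zero lA lB hlA hlB i j h, zero_add]
      exact le_trans (hdiv _ _ (min_le_right _ _)) (le_refl _)
    refine le_trans (Finset.sum_le_sum fun j _ => h1 j) ?_
    rw [← Finset.sum_div, ← Finset.mul_sum]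
    rcases eq_or_lt_of_le (DD_nonneg lA lB) with h2 | h2
    · rw [← h2, div_zero]; exact mm_nonneg lA lB hlA hlB i
    · rw [mul_div_assoc]
      calc mm lA lB i * (DD lA lB / DD lA lB) = mm lA lB i := by rw [div_self h2.ne', mul_one]
        _ ≤ mm lA lB i := le_refl _
  · have h1 : ∀ j, tt lA lB i j + tt lA lB j i ≤ mm lA lB i * qq lA lB j / DD lA lB := by
      intro j
      rw [tt_col_zero lA lB hlA hlB i j h, add_zero]
      exact hdiv _ _ (min_le_left _ _)
    refine le_trans (Finset.sum_le_sum fun j _ => h1 j) ?_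
    rw [← Finset.sum_div, ← Finset.mul_sum, sum_qq lA lB hsA hsB]
    rcases eq_or_lt_of_le (DD_nonneg lA lB) with h2 | h2
    · rw [← h2, mul_zero, zero_div]; exact mm_nonneg lA lB hlA hlB i
    · rw [mul_div_assoc, div_self h2.ne', mul_one]
include hlA hlB hsA hsB in
lemma cc_nonneg (i : Fin d) : 0 ≤ cc lA lB i :=
  sub_nonneg.mpr (sum_tt_le lA lB hlA hlB hsA hsB i)
include hlA hlB hsA hsB in
lemma rowA (i : Fin d) :
    cc lA lB i + ∑ j, (uu lA lB i j ^ 2 + vv lA lB j i ^ 2) = lA i := by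
  have h1 : ∀ j, uu lA lB i j ^ 2 + vv lA lB j i ^ 2
      = (tt lA lB i j + tt lA lB j i) + ff lA lB i j := by
    intro j
    rw [uu_sq lA lB hlA hlB, vv_sq lA lB hlA hlB]; ring
  rw [Finset.sum_congr rfl fun j _ => h1 j, Finset.sum_add_distrib,
    sum_ff_row lA lB hsA hsB i]
  unfold cc
  have := mm_add_pp lA lB i
  linarith
include hlA hlB hsA hsB in
lemma rowB (i : Fin d) :
    cc lA lB i + ∑ j, (vv lA lB i j ^ 2 + uu lA lB j i ^ 2) = lB i := by
  have h1 : ∀ j, vv lA lB i j ^ 2 + uu lA lB j i ^ 2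
      = (tt lA lB i j + tt lA lB j i) + ff lA lB j i := by
    intro j
    rw [uu_sq lA lB hlA hlB, vv_sq lA lB hlA hlB]; ring
  rw [Finset.sum_congr rfl fun j _ => h1 j, Finset.sum_add_distrib,
    sum_ff_col lA lB hsA hsB i]
  unfold cc
  have := mm_add_qq lA lB i
  linarith
include hlA hlB hsA hsB in
lemma total_sum :
    ∑ i, cc lA lB i + ∑ i, ∑ j, (uu lA lB i j ^ 2 + vv lA lB i j ^ 2) = 1 := by
  have h1 : ∑ i, (cc lA lB i + ∑ j, (uu lA lB i j ^ 2 + vv lA lB j i ^ 2)) = 1 := by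
    rw [Finset.sum_congr rfl fun i _ => rowA lA lB hlA hlB hsA hsB i, hsA]
  rw [Finset.sum_add_distrib] at h1
  have h2 : ∑ i, ∑ j, (uu lA lB i j ^ 2 + vv lA lB j i ^ 2)
      = ∑ i, ∑ j, (uu lA lB i j ^ 2 + vv lA lB i j ^ 2) := by
    simp only [Finset.sum_add_distrib]
    rw [Finset.sum_comm (f := fun i j => vv lA lB j i ^ 2)]
  linarith
include hlA hlB in
omit hlA hlB in
lemma Bp_add_Cq (i : Fin d) : Bp lA lB i + Cq lA lB i = Bb lA lB i := by
  unfold Bp Cq Bb mm pp qq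
  rcases le_total (lA i) (lB i) with h | h
  · rw [min_eq_left h, max_eq_right (by linarith : lA i - lB i ≤ 0),
      max_eq_left (by linarith : (0:ℝ) ≤ lB i - lA i), add_zero,
      (by ring : lA i + (lB i - lA i) = lB i)]
    ring
  · rw [min_eq_right h, max_eq_left (by linarith : (0:ℝ) ≤ lA i - lB i),
      max_eq_right (by linarith : lB i - lA i ≤ 0), add_zero,
      (by ring : lB i + (lA i - lB i) = lA i)]
    ring
include hlA hlB hsA hsB in
lemma core_pointwise (β : ℝ) (hβ0 : 0 ≤ β) (hβ : ∀ i, β ≤ Bb lA lB i)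
    (hDD : 0 < DD lA lB) (i j : Fin d) :
    (uu lA lB i j - vv lA lB i j) ^ 2 ≤
      qq lA lB j / DD lA lB * Bp lA lB i + pp lA lB i / DD lA lB * Cq lA lB j
        - β * (pp lA lB i * qq lA lB j) / (DD lA lB * DD lA lB) := by
  have hBpnn : ∀ k, (0:ℝ) ≤ Bp lA lB k := fun k => sq_nonneg _
  have hCqnn : ∀ k, (0:ℝ) ≤ Cq lA lB k := fun k => sq_nonneg _
  have hq0 := qq_nonneg lA lB j
  have hp0 := pp_nonneg lA lB i
  have hqD : qq lA lB j / DD lA lB ≤ 1 := (div_le_one hDD).mpr (qq_le_DD lA lB hsA hsB j)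
  have hpD : pp lA lB i / DD lA lB ≤ 1 := (div_le_one hDD).mpr (pp_le_DD lA lB i)
  rcases le_total (mm lA lB i * qq lA lB j) (mm lA lB j * pp lA lB i) with h | h
  · have e1 : tt lA lB i j = mm lA lB i * (qq lA lB j / DD lA lB) := by
      unfold tt; rw [min_eq_left h]; ring
    have e2 : tt lA lB i j + ff lA lB i j
        = (mm lA lB i + pp lA lB i) * (qq lA lB j / DD lA lB) := by
      unfold tt ff; rw [min_eq_left h]; ring
    have equ : uu lA lB i j
        = Real.sqrt (mm lA lB i + pp lA lB i) * Real.sqrt (qq lA lB j / DD lA lB) := by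
      unfold uu
      rw [e2, Real.sqrt_mul (add_nonneg (mm_nonneg lA lB hlA hlB i) hp0)]
    have eqv : vv lA lB i j
        = Real.sqrt (mm lA lB i) * Real.sqrt (qq lA lB j / DD lA lB) := by
      unfold vv
      rw [e1, Real.sqrt_mul (mm_nonneg lA lB hlA hlB i)]
    have lhs_eq : (uu lA lB i j - vv lA lB i j) ^ 2
        = Bp lA lB i * (qq lA lB j / DD lA lB) := by
      rw [equ, eqv, ← sub_mul, mul_pow, Real.sq_sqrt (div_nonneg hq0 hDD.le)]
      rfl
    have hle : β * (qq lA lB j / DD lA lB) ≤ Cq lA lB j := by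
      rcases eq_or_lt_of_le hq0 with hq | hq
      · rw [← hq, zero_div, mul_zero]; exact hCqnn j
      · have h5 : lA j ≤ lB j := by
          by_contra h'
          push_neg at h'
          unfold qq at hq
          rw [max_eq_right (by linarith)] at hq
          exact lt_irrefl 0 hq
        have hCq : Cq lA lB j = Bb lA lB j := by
          unfold Cq Bb mm qq
          rw [min_eq_left h5, max_eq_left (by linarith : (0:ℝ) ≤ lB j - lA j),
            (by ring : lA j + (lB j - lA j) = lB j)]
          ring
        rw [hCq]
        calc β * (qq lA lB j / DD lA lB) ≤ Bb lA lB j * 1 :=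
              mul_le_mul (hβ j) hqD (div_nonneg hq0 hDD.le) (sq_nonneg _)
          _ = Bb lA lB j := mul_one _
    have key : qq lA lB j / DD lA lB * Bp lA lB i + pp lA lB i / DD lA lB * Cq lA lB j
        - β * (pp lA lB i * qq lA lB j) / (DD lA lB * DD lA lB)
        - Bp lA lB i * (qq lA lB j / DD lA lB)
        = (pp lA lB i / DD lA lB) * (Cq lA lB j - β * (qq lA lB j / DD lA lB)) := by
      field_simp
      ring
    have hnn : 0 ≤ (pp lA lB i / DD lA lB) * (Cq lA lB j - β * (qq lA lB j / DD lA lB)) :=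
      mul_nonneg (div_nonneg hp0 hDD.le) (sub_nonneg.mpr hle)
    linarith [lhs_eq, key, hnn]
  · have e1 : tt lA lB i j = mm lA lB j * (pp lA lB i / DD lA lB) := by
      unfold tt; rw [min_eq_right h]; ring
    have e2 : tt lA lB i j + ff lA lB i j
        = (mm lA lB j + qq lA lB j) * (pp lA lB i / DD lA lB) := by
      unfold tt ff; rw [min_eq_right h]; ring
    have equ : uu lA lB i j
        = Real.sqrt (mm lA lB j + qq lA lB j) * Real.sqrt (pp lA lB i / DD lA lB) := by
      unfold uu
      rw [e2, Real.sqrt_mul (add_nonneg (mm_nonneg lA lB hlA hlB j) hq0)]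
    have eqv : vv lA lB i j
        = Real.sqrt (mm lA lB j) * Real.sqrt (pp lA lB i / DD lA lB) := by
      unfold vv
      rw [e1, Real.sqrt_mul (mm_nonneg lA lB hlA hlB j)]
    have lhs_eq : (uu lA lB i j - vv lA lB i j) ^ 2
        = Cq lA lB j * (pp lA lB i / DD lA lB) := by
      rw [equ, eqv, ← sub_mul, mul_pow, Real.sq_sqrt (div_nonneg hp0 hDD.le)]
      rfl
    have hle : β * (pp lA lB i / DD lA lB) ≤ Bp lA lB i := by
      rcases eq_or_lt_of_le hp0 with hp | hp
      · rw [← hp, zero_div, mul_zero]; exact hBpnn i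
      · have h5 : lB i ≤ lA i := by
          by_contra h'
          push_neg at h'
          unfold pp at hp
          rw [max_eq_right (by linarith)] at hp
          exact lt_irrefl 0 hp
        have hBp : Bp lA lB i = Bb lA lB i := by
          unfold Bp Bb mm pp
          rw [min_eq_right h5, max_eq_left (by linarith : (0:ℝ) ≤ lA i - lB i),
            (by ring : lB i + (lA i - lB i) = lA i)]
        rw [hBp]
        calc β * (pp lA lB i / DD lA lB) ≤ Bb lA lB i * 1 :=
              mul_le_mul (hβ i) hpD (div_nonneg hp0 hDD.le) (sq_nonneg _)
          _ = Bb lA lB i := mul_one _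
    have key : qq lA lB j / DD lA lB * Bp lA lB i + pp lA lB i / DD lA lB * Cq lA lB j
        - β * (pp lA lB i * qq lA lB j) / (DD lA lB * DD lA lB)
        - Cq lA lB j * (pp lA lB i / DD lA lB)
        = (qq lA lB j / DD lA lB) * (Bp lA lB i - β * (pp lA lB i / DD lA lB)) := by
      field_simp
      ring
    have hnn : 0 ≤ (qq lA lB j / DD lA lB) * (Bp lA lB i - β * (pp lA lB i / DD lA lB)) :=
      mul_nonneg (div_nonneg hq0 hDD.le) (sub_nonneg.mpr hle)
    linarith [lhs_eq, key, hnn]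
include hlA hlB hsA hsB in
lemma main_sum (hd : 0 < d) (β : ℝ) (hβ0 : 0 ≤ β) (hβ : ∀ i, β ≤ Bb lA lB i) :
    ∑ i, ∑ j, (uu lA lB i j - vv lA lB i j) ^ 2 ≤ ∑ i, Bb lA lB i - β := by
  have hBbnn : ∀ k, (0:ℝ) ≤ Bb lA lB k := fun k => sq_nonneg _
  have hβBb : β ≤ ∑ i, Bb lA lB i :=
    le_trans (hβ ⟨0, hd⟩)
      (Finset.single_le_sum (fun k _ => hBbnn k) (Finset.mem_univ (⟨0, hd⟩ : Fin d)))
  rcases eq_or_lt_of_le (DD_nonneg lA lB) with hD | hD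
  · have hppz : ∀ i, pp lA lB i = 0 := fun i =>
      le_antisymm (hD ▸ pp_le_DD lA lB i) (pp_nonneg lA lB i)
    have hzero : ∑ i, ∑ j, (uu lA lB i j - vv lA lB i j) ^ 2 = 0 := by
      refine Finset.sum_eq_zero fun i _ => Finset.sum_eq_zero fun j _ => ?_
      have : ff lA lB i j = 0 := by unfold ff; rw [hppz i, zero_mul, zero_div]
      unfold uu vv
      rw [this, add_zero, sub_self]
      exact zero_pow (by norm_num)
    rw [hzero]
    linarith
  · have hq1 : ∑ j, qq lA lB j / DD lA lB = 1 := by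
      rw [← Finset.sum_div, sum_qq lA lB hsA hsB, div_self hD.ne']
    have hp1 : ∑ i, pp lA lB i / DD lA lB = 1 := by
      rw [← Finset.sum_div, show ∑ i, pp lA lB i = DD lA lB from rfl, div_self hD.ne']
    have S1 : ∑ i, ∑ j, qq lA lB j / DD lA lB * Bp lA lB i = ∑ i, Bp lA lB i := by
      refine Finset.sum_congr rfl fun i _ => ?_
      rw [← Finset.sum_mul, hq1, one_mul]
    have S2 : ∑ i, ∑ j, pp lA lB i / DD lA lB * Cq lA lB j = ∑ j, Cq lA lB j := by
      rw [Finset.sum_comm]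
      refine Finset.sum_congr rfl fun j _ => ?_
      rw [← Finset.sum_mul, hp1, one_mul]
    have S3 : ∑ i, ∑ j, β * (pp lA lB i * qq lA lB j) / (DD lA lB * DD lA lB) = β := by
      have hpt : ∀ i j, β * (pp lA lB i * qq lA lB j) / (DD lA lB * DD lA lB)
          = β * (pp lA lB i / DD lA lB) * (qq lA lB j / DD lA lB) := by
        intro i j
        rw [mul_assoc, div_mul_div_comm, ← mul_div_assoc]
      calc ∑ i, ∑ j, β * (pp lA lB i * qq lA lB j) / (DD lA lB * DD lA lB)
          = ∑ i, ∑ j, β * (pp lA lB i / DD lA lB) * (qq lA lB j / DD lA lB) := by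
            exact Finset.sum_congr rfl fun i _ => Finset.sum_congr rfl fun j _ => hpt i j
        _ = ∑ i, β * (pp lA lB i / DD lA lB) * 1 := by
            refine Finset.sum_congr rfl fun i _ => ?_
            rw [← Finset.mul_sum, hq1]
        _ = β := by
            simp only [mul_one]
            rw [← Finset.mul_sum, hp1, mul_one]
    have hBbsum : ∑ i, Bp lA lB i + ∑ i, Cq lA lB i = ∑ i, Bb lA lB i := by
      rw [← Finset.sum_add_distrib]
      exact Finset.sum_congr rfl fun i _ => Bp_add_Cq lA lB i
    calc ∑ i, ∑ j, (uu lA lB i j - vv lA lB i j) ^ 2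
        ≤ ∑ i, ∑ j, (qq lA lB j / DD lA lB * Bp lA lB i
            + pp lA lB i / DD lA lB * Cq lA lB j
            - β * (pp lA lB i * qq lA lB j) / (DD lA lB * DD lA lB)) :=
          Finset.sum_le_sum fun i _ => Finset.sum_le_sum fun j _ =>
            core_pointwise lA lB hlA hlB hsA hsB β hβ0 hβ hD i j
      _ = ∑ i, Bb lA lB i - β := by
          simp only [Finset.sum_sub_distrib, Finset.sum_add_distrib]
          rw [S1, S2, S3]
          linarith

end scalar

section matrixside

variable (hlA : ∀ i, 0 ≤ lA i) (hlB : ∀ i, 0 ≤ lB i)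
  (hsA : ∑ i, lA i = 1) (hsB : ∑ i, lB i = 1)

lemma sum_ite_mul_ite (r s : ℝ) (P2 Q2 : Fin d) :
    ∑ k, (if k = P2 then r else 0) * (if k = Q2 then s else 0)
      = if P2 = Q2 then r * s else 0 := by
  have h : ∀ k : Fin d, (if k = P2 then r else 0) * (if k = Q2 then s else 0)
      = if k = P2 then (if P2 = Q2 then r * s else 0) else 0 := by
    intro k
    by_cases hk : k = P2
    · subst hk
      by_cases h2 : k = Q2 <;> simp [h2]
    · simp [hk]
  rw [Finset.sum_congr rfl fun k _ => h k, Finset.sum_ite_eq' Finset.univ P2]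
  simp

lemma sum_sp_mul_right (r s : ℝ) (P Q : Fin d × Fin d) (i i' : Fin d) :
    ∑ k, sp r P (i, k) * sp s Q (i', k)
      = if i = P.1 ∧ i' = Q.1 ∧ P.2 = Q.2 then r * s else 0 := by
  obtain ⟨P1, P2⟩ := P
  obtain ⟨Q1, Q2⟩ := Q
  simp only [sp, Prod.mk.injEq]
  by_cases h1 : i = P1 <;> by_cases h2 : i' = Q1 <;> by_cases h3 : P2 = Q2 <;>
    simp [h1, h2, h3, sum_ite_mul_ite, eq_comm]

lemma sum_sp_mul_left (r s : ℝ) (P Q : Fin d × Fin d) (i i' : Fin d) :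
    ∑ k, sp r P (k, i) * sp s Q (k, i')
      = if i = P.2 ∧ i' = Q.2 ∧ P.1 = Q.1 then r * s else 0 := by
  obtain ⟨P1, P2⟩ := P
  obtain ⟨Q1, Q2⟩ := Q
  simp only [sp, Prod.mk.injEq]
  by_cases h1 : i = P2 <;> by_cases h2 : i' = Q2 <;> by_cases h3 : P1 = Q1 <;>
    simp [h1, h2, h3, sum_ite_mul_ite, and_comm, eq_comm]

lemma sum_sp_swap (r s : ℝ) (P Q : Fin d × Fin d) :
    ∑ q' : Fin d × Fin d, sp r P q' * sp s Q (q'.2, q'.1)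
      = if (P.2, P.1) = Q then r * s else 0 := by
  have h : ∀ q' : Fin d × Fin d, sp r P q' * sp s Q (q'.2, q'.1)
      = if q' = P then (if (P.2, P.1) = Q then r * s else 0) else 0 := by
    intro q'
    unfold sp
    by_cases hq : q' = P
    · subst hq
      by_cases h2 : (q'.2, q'.1) = Q <;> simp [h2]
    · simp [hq]
  rw [Finset.sum_congr rfl fun q' _ => h q', Finset.sum_ite_eq' Finset.univ P]
  simp

include hlA hlB hsA hsB in
lemma psi_right (a i i' : Fin d) :
    ∑ k, psiR lA lB a (i, k) * psiR lA lB a (i', k)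
      = if i = a ∧ i' = a then cc lA lB a else 0 := by
  unfold psiR
  rw [sum_sp_mul_right, Real.mul_self_sqrt (cc_nonneg lA lB hlA hlB hsA hsB a)]
  simp

include hlA hlB hsA hsB in
lemma psi_left (a i i' : Fin d) :
    ∑ k, psiR lA lB a (k, i) * psiR lA lB a (k, i')
      = if i = a ∧ i' = a then cc lA lB a else 0 := by
  unfold psiR
  rw [sum_sp_mul_left, Real.mul_self_sqrt (cc_nonneg lA lB hlA hlB hsA hsB a)]
  simp

include hlA hlB hsA hsB in
lemma psi_swap (a : Fin d) :
    ∑ q' : Fin d × Fin d, psiR lA lB a q' * psiR lA lB a (q'.2, q'.1) = cc lA lB a := by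
  unfold psiR
  rw [sum_sp_swap, Real.mul_self_sqrt (cc_nonneg lA lB hlA hlB hsA hsB a)]
  simp

lemma chiR_expand (a b : Fin d) (p q : Fin d × Fin d) :
    chiR lA lB a b p * chiR lA lB a b q
      = sp (uu lA lB a b) (a, b) p * sp (uu lA lB a b) (a, b) q
        + sp (uu lA lB a b) (a, b) p * sp (vv lA lB a b) (b, a) q
        + (sp (vv lA lB a b) (b, a) p * sp (uu lA lB a b) (a, b) q
        + sp (vv lA lB a b) (b, a) p * sp (vv lA lB a b) (b, a) q) := by
  unfold chiR; ring

include hlA hlB in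
lemma chi_right (a b i i' : Fin d) :
    ∑ k, chiR lA lB a b (i, k) * chiR lA lB a b (i', k)
      = (if i = a ∧ i' = a then uu lA lB a b ^ 2 else 0)
        + (if i = b ∧ i' = b then vv lA lB a b ^ 2 else 0) := by
  rw [Finset.sum_congr rfl fun k _ => chiR_expand lA lB a b (i, k) (i', k),
    Finset.sum_add_distrib, Finset.sum_add_distrib, Finset.sum_add_distrib,
    sum_sp_mul_right, sum_sp_mul_right, sum_sp_mul_right, sum_sp_mul_right]
  have hT2 : (if i = a ∧ i' = b ∧ b = a then uu lA lB a b * vv lA lB a b else 0) = 0 := by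
    by_cases hba : b = a
    · subst hba
      rw [vv_diag lA lB hlA hlB, mul_zero]
      simp
    · simp [hba]
  have hT3 : (if i = b ∧ i' = a ∧ a = b then vv lA lB a b * uu lA lB a b else 0) = 0 := by
    by_cases hba : a = b
    · subst hba
      rw [vv_diag lA lB hlA hlB, zero_mul]
      simp
    · simp [hba]
  rw [hT2, hT3]
  simp [pow_two]

include hlA hlB in
lemma chi_left (a b i i' : Fin d) :
    ∑ k, chiR lA lB a b (k, i) * chiR lA lB a b (k, i')
      = (if i = b ∧ i' = b then uu lA lB a b ^ 2 else 0)
        + (if i = a ∧ i' = a then vv lA lB a b ^ 2 else 0) := by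
  rw [Finset.sum_congr rfl fun k _ => chiR_expand lA lB a b (k, i) (k, i'),
    Finset.sum_add_distrib, Finset.sum_add_distrib, Finset.sum_add_distrib,
    sum_sp_mul_left, sum_sp_mul_left, sum_sp_mul_left, sum_sp_mul_left]
  have hT2 : (if i = b ∧ i' = a ∧ a = b then uu lA lB a b * vv lA lB a b else 0) = 0 := by
    by_cases hba : a = b
    · subst hba
      rw [vv_diag lA lB hlA hlB, mul_zero]
      simp
    · simp [hba]
  have hT3 : (if i = a ∧ i' = b ∧ b = a then vv lA lB a b * uu lA lB a b else 0) = 0 := by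
    by_cases hba : b = a
    · subst hba
      rw [vv_diag lA lB hlA hlB, zero_mul]
      simp
    · simp [hba]
  rw [hT2, hT3]
  simp [pow_two]

include hlA hlB in
lemma chi_swap (a b : Fin d) :
    ∑ q' : Fin d × Fin d, chiR lA lB a b q' * chiR lA lB a b (q'.2, q'.1)
      = 2 * (uu lA lB a b * vv lA lB a b) := by
  rw [Finset.sum_congr rfl fun q' _ => chiR_expand lA lB a b q' (q'.2, q'.1),
    Finset.sum_add_distrib, Finset.sum_add_distrib, Finset.sum_add_distrib,
    sum_sp_swap, sum_sp_swap, sum_sp_swap, sum_sp_swap]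
  have hT1 : (if ((b : Fin d), (a : Fin d)) = (a, b) then uu lA lB a b * uu lA lB a b else 0) = 0 := by
    by_cases hba : b = a
    · subst hba
      rw [uu_diag lA lB hlA hlB, mul_zero]
      simp
    · simp [Prod.ext_iff, hba]
  have hT4 : (if ((a : Fin d), (b : Fin d)) = (b, a) then vv lA lB a b * vv lA lB a b else 0) = 0 := by
    by_cases hba : a = b
    · subst hba
      rw [vv_diag lA lB hlA hlB, mul_zero]
      simp
    · simp [Prod.ext_iff, hba]
  rw [hT1, hT4]
  simp
  ring

lemma rho_entry (p q : Fin d × Fin d) :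
    rho lA lB p q
      = ((∑ a, psiR lA lB a p * psiR lA lB a q
          + ∑ a, ∑ b, chiR lA lB a b p * chiR lA lB a b q : ℝ) : ℂ) := by
  simp only [rho, Matrix.add_apply, Matrix.sum_apply, proj, Matrix.of_apply,
    Complex.star_def, Complex.conj_ofReal]
  push_cast
  rfl

include hlA hlB hsA hsB in
lemma traceRight_rho :
    traceRight (rho lA lB) = Matrix.diagonal (fun i => ((lA i : ℝ) : ℂ)) := by
  ext i i'
  show (∑ k, rho lA lB (i, k) (i', k)) = _
  rw [Finset.sum_congr rfl fun k _ => rho_entry lA lB (i, k) (i', k), ← Complex.ofReal_sum]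
  have hreal : (∑ k, (∑ a, psiR lA lB a (i, k) * psiR lA lB a (i', k)
      + ∑ a, ∑ b, chiR lA lB a b (i, k) * chiR lA lB a b (i', k)))
      = if i = i' then lA i else 0 := by
    rw [Finset.sum_add_distrib, Finset.sum_comm]
    rw [Finset.sum_congr rfl fun a _ => psi_right lA lB hlA hlB hsA hsB a i i']
    have hswap2 : (∑ k, ∑ a, ∑ b, chiR lA lB a b (i, k) * chiR lA lB a b (i', k))
        = ∑ a, ∑ b, ∑ k, chiR lA lB a b (i, k) * chiR lA lB a b (i', k) := by
      rw [Finset.sum_comm]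
      exact Finset.sum_congr rfl fun a _ => Finset.sum_comm
    rw [hswap2,
      Finset.sum_congr rfl fun a _ => Finset.sum_congr rfl fun b _ =>
        chi_right lA lB hlA hlB a b i i']
    by_cases h : i = i'
    · subst h
      simp only [and_self]
      have hA : (∑ a, if i = a then cc lA lB a else 0) = cc lA lB i := by simp
      have hU : (∑ a, ∑ b, if i = a then uu lA lB a b ^ 2 else 0)
          = ∑ b, uu lA lB i b ^ 2 := by
        rw [Finset.sum_comm]; simp
      have hV : (∑ a, ∑ b, if i = b then vv lA lB a b ^ 2 else 0)
          = ∑ a, vv lA lB a i ^ 2 := by simp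
      simp only [Finset.sum_add_distrib]
      rw [hA, hU, hV, if_pos trivial]
      have hrow := rowA lA lB hlA hlB hsA hsB i
      rw [← hrow, Finset.sum_add_distrib]
    · have z1 : (∑ a, if i = a ∧ i' = a then cc lA lB a else 0) = 0 := by
        refine Finset.sum_eq_zero fun a _ => ?_
        rw [if_neg]
        rintro ⟨rfl, rfl⟩
        exact h rfl
      have z2 : (∑ a, ∑ b, ((if i = a ∧ i' = a then uu lA lB a b ^ 2 else 0)
          + (if i = b ∧ i' = b then vv lA lB a b ^ 2 else 0))) = 0 := by
        refine Finset.sum_eq_zero fun a _ => Finset.sum_eq_zero fun b _ => ?_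
        rw [if_neg, if_neg, add_zero]
        · rintro ⟨rfl, rfl⟩; exact h rfl
        · rintro ⟨rfl, rfl⟩; exact h rfl
      rw [z1, z2, add_zero, if_neg h]
  rw [hreal, Matrix.diagonal_apply]
  by_cases h : i = i' <;> simp [h]

include hlA hlB hsA hsB in
lemma traceLeft_rho :
    traceLeft (rho lA lB) = Matrix.diagonal (fun i => ((lB i : ℝ) : ℂ)) := by
  ext i i'
  show (∑ k, rho lA lB (k, i) (k, i')) = _
  rw [Finset.sum_congr rfl fun k _ => rho_entry lA lB (k, i) (k, i'), ← Complex.ofReal_sum]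
  have hreal : (∑ k, (∑ a, psiR lA lB a (k, i) * psiR lA lB a (k, i')
      + ∑ a, ∑ b, chiR lA lB a b (k, i) * chiR lA lB a b (k, i')))
      = if i = i' then lB i else 0 := by
    rw [Finset.sum_add_distrib, Finset.sum_comm]
    rw [Finset.sum_congr rfl fun a _ => psi_left lA lB hlA hlB hsA hsB a i i']
    have hswap2 : (∑ k, ∑ a, ∑ b, chiR lA lB a b (k, i) * chiR lA lB a b (k, i'))
        = ∑ a, ∑ b, ∑ k, chiR lA lB a b (k, i) * chiR lA lB a b (k, i') := by
      rw [Finset.sum_comm]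
      exact Finset.sum_congr rfl fun a _ => Finset.sum_comm
    rw [hswap2,
      Finset.sum_congr rfl fun a _ => Finset.sum_congr rfl fun b _ =>
        chi_left lA lB hlA hlB a b i i']
    by_cases h : i = i'
    · subst h
      simp only [and_self]
      have hA : (∑ a, if i = a then cc lA lB a else 0) = cc lA lB i := by simp
      have hU : (∑ a, ∑ b, if i = b then uu lA lB a b ^ 2 else 0)
          = ∑ a, uu lA lB a i ^ 2 := by simp
      have hV : (∑ a, ∑ b, if i = a then vv lA lB a b ^ 2 else 0)
          = ∑ b, vv lA lB i b ^ 2 := by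
        rw [Finset.sum_comm]; simp
      simp only [Finset.sum_add_distrib]
      rw [hA, hU, hV, if_pos trivial]
      have hrow := rowB lA lB hlA hlB hsA hsB i
      rw [← hrow, Finset.sum_add_distrib]
      ring
    · have z1 : (∑ a, if i = a ∧ i' = a then cc lA lB a else 0) = 0 := by
        refine Finset.sum_eq_zero fun a _ => ?_
        rw [if_neg]
        rintro ⟨rfl, rfl⟩
        exact h rfl
      have z2 : (∑ a, ∑ b, ((if i = b ∧ i' = b then uu lA lB a b ^ 2 else 0)
          + (if i = a ∧ i' = a then vv lA lB a b ^ 2 else 0))) = 0 := by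
        refine Finset.sum_eq_zero fun a _ => Finset.sum_eq_zero fun b _ => ?_
        rw [if_neg, if_neg, add_zero]
        · rintro ⟨rfl, rfl⟩; exact h rfl
        · rintro ⟨rfl, rfl⟩; exact h rfl
      rw [z1, z2, add_zero, if_neg h]
  rw [hreal, Matrix.diagonal_apply]
  by_cases h : i = i' <;> simp [h]

lemma posSemidef_proj {n' : Type*} [Fintype n'] [DecidableEq n'] (v : n' → ℂ) :
    (proj v).PosSemidef := by
  have h : proj v = (Matrix.replicateCol Unit v) * (Matrix.replicateCol Unit v)ᴴ := by
    ext p q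
    simp [proj, Matrix.mul_apply, Matrix.replicateCol, Matrix.conjTranspose_apply]
  rw [h]
  exact Matrix.posSemidef_self_mul_conjTranspose _

lemma posSemidef_rho : (rho lA lB).PosSemidef := by
  have h1 : (∑ a : Fin d, proj (fun p => ((psiR lA lB a p : ℝ) : ℂ))).PosSemidef := by
    refine Finset.sum_induction _ _ (fun x y hx hy => hx.add hy) ?_ ?_
    · exact Matrix.PosSemidef.zero
    · exact fun a _ => posSemidef_proj _
  have h2 : (∑ a : Fin d, ∑ b : Fin d,
      proj (fun p => ((chiR lA lB a b p : ℝ) : ℂ))).PosSemidef := by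
    refine Finset.sum_induction _ _ (fun x y hx hy => hx.add hy) Matrix.PosSemidef.zero ?_
    intro a _
    refine Finset.sum_induction _ _ (fun x y hx hy => hx.add hy) Matrix.PosSemidef.zero ?_
    exact fun b _ => posSemidef_proj _
  exact h1.add h2

lemma trace_eq_traceRight (M : Matrix (Fin d × Fin d) (Fin d × Fin d) ℂ) :
    M.trace = ∑ i, traceRight M i i := by
  simp [Matrix.trace, traceRight, Matrix.diag, Fintype.sum_prod_type]

include hlA hlB hsA hsB in
lemma trace_rho : (rho lA lB).trace = 1 := by
  rw [trace_eq_traceRight, traceRight_rho lA lB hlA hlB hsA hsB]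
  simp only [Matrix.diagonal_apply_eq]
  rw [← Complex.ofReal_sum, hsA, Complex.ofReal_one]

lemma trace_swap_mul (M : Matrix (Fin d × Fin d) (Fin d × Fin d) ℂ) :
    (swap d * M).trace = ∑ q' : Fin d × Fin d, M q' (q'.2, q'.1) := by
  simp only [Matrix.trace, Matrix.diag, Matrix.mul_apply, swap, Matrix.of_apply]
  rw [Finset.sum_comm]
  refine Finset.sum_congr rfl fun q' _ => ?_
  have h : ∀ p : Fin d × Fin d,
      (if p.1 = q'.2 ∧ p.2 = q'.1 then (1:ℂ) else 0) * M q' p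
        = if p = (q'.2, q'.1) then M q' p else 0 := by
    intro p
    by_cases hp : p = (q'.2, q'.1)
    · subst hp; simp
    · rw [if_neg hp, if_neg, zero_mul]
      rw [Prod.ext_iff] at hp
      exact fun hc => hp ⟨hc.1, hc.2⟩
  rw [Finset.sum_congr rfl fun p _ => h p, Finset.sum_ite_eq' Finset.univ (q'.2, q'.1)]
  simp

include hlA hlB hsA hsB in
lemma swap_trace_rho :
    (swap d * rho lA lB).trace
      = ((∑ a, cc lA lB a + ∑ a, ∑ b, 2 * (uu lA lB a b * vv lA lB a b) : ℝ) : ℂ) := by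
  rw [trace_swap_mul]
  rw [Finset.sum_congr rfl fun q' _ => rho_entry lA lB q' (q'.2, q'.1), ← Complex.ofReal_sum]
  congr 1
  rw [Finset.sum_add_distrib, Finset.sum_comm]
  rw [Finset.sum_congr rfl fun a _ => psi_swap lA lB hlA hlB hsA hsB a]
  have hswap2 : (∑ q' : Fin d × Fin d, ∑ a, ∑ b, chiR lA lB a b q' * chiR lA lB a b (q'.2, q'.1))
      = ∑ a, ∑ b, ∑ q' : Fin d × Fin d, chiR lA lB a b q' * chiR lA lB a b (q'.2, q'.1) := by
    rw [Finset.sum_comm]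
    exact Finset.sum_congr rfl fun a _ => Finset.sum_comm
  rw [hswap2,
    Finset.sum_congr rfl fun a _ => Finset.sum_congr rfl fun b _ =>
      chi_swap lA lB hlA hlB a b]

end matrixside

end S12

theorem stmt12 (d : ℕ) (hd : 0 < d) (lA lB : Fin d → ℝ)
    (hlA : ∀ i, 0 ≤ lA i) (hlB : ∀ i, 0 ≤ lB i)
    (hsA : ∑ i, lA i = 1) (hsB : ∑ i, lB i = 1) :
    ∃ ρAB : Matrix ((Fin d) × (Fin d)) ((Fin d) × (Fin d)) ℂ,
      IsCoupling ρAB (Matrix.diagonal fun i => ((lA i : ℝ) : ℂ))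
        (Matrix.diagonal fun i => ((lB i : ℝ) : ℂ)) ∧
      ((Psym d * ρAB).trace).re ≥
        (∑ i, Real.sqrt (lA i * lB i))
          + (⨅ i, (Real.sqrt (lA i) - Real.sqrt (lB i)) ^ 2) / 2 := by
  classical
  haveI hne : Nonempty (Fin d) := ⟨⟨0, hd⟩⟩
  refine ⟨S12.rho lA lB, ⟨⟨S12.posSemidef_rho lA lB, S12.trace_rho lA lB hlA hlB hsA hsB⟩,
    S12.traceRight_rho lA lB hlA hlB hsA hsB, S12.traceLeft_rho lA lB hlA hlB hsA hsB⟩, ?_⟩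
  set β := ⨅ i, (Real.sqrt (lA i) - Real.sqrt (lB i)) ^ 2 with hβdef
  have hβ : ∀ i, β ≤ S12.Bb lA lB i := fun i =>
    ciInf_le (Set.Finite.bddBelow (Set.finite_range _)) i
  have hβ0 : 0 ≤ β := le_ciInf fun i => sq_nonneg _
  have htr : (Psym d * S12.rho lA lB).trace
      = (((1 + (∑ a, S12.cc lA lB a
          + ∑ a, ∑ b, 2 * (S12.uu lA lB a b * S12.vv lA lB a b))) / 2 : ℝ) : ℂ) := by
    rw [Psym, Matrix.smul_mul, Matrix.add_mul, Matrix.one_mul, Matrix.trace_smul,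
      Matrix.trace_add, S12.trace_rho lA lB hlA hlB hsA hsB,
      S12.swap_trace_rho lA lB hlA hlB hsA hsB]
    rw [smul_eq_mul]
    push_cast
    ring
  rw [htr, Complex.ofReal_re]
  have e1 := S12.total_sum lA lB hlA hlB hsA hsB
  have e2 : ∑ i, ∑ j, (S12.uu lA lB i j - S12.vv lA lB i j) ^ 2
      = ∑ i, ∑ j, (S12.uu lA lB i j ^ 2 + S12.vv lA lB i j ^ 2)
        - ∑ i, ∑ j, 2 * (S12.uu lA lB i j * S12.vv lA lB i j) := by
    rw [← Finset.sum_sub_distrib]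
    refine Finset.sum_congr rfl fun i _ => ?_
    rw [← Finset.sum_sub_distrib]
    refine Finset.sum_congr rfl fun j _ => ?_
    ring
  have e3 : ∑ i, S12.Bb lA lB i = 2 - 2 * ∑ i, Real.sqrt (lA i * lB i) := by
    have hpt : ∀ i, S12.Bb lA lB i = lA i + lB i - 2 * Real.sqrt (lA i * lB i) := by
      intro i
      unfold S12.Bb
      rw [Real.sqrt_mul (hlA i), sub_sq, Real.sq_sqrt (hlA i), Real.sq_sqrt (hlB i)]
      ring
    rw [Finset.sum_congr rfl fun i _ => hpt i, Finset.sum_sub_distrib,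
      Finset.sum_add_distrib, hsA, hsB, ← Finset.mul_sum]
    ring
  have hmain := S12.main_sum lA lB hlA hlB hsA hsB hd β hβ0 hβ
  linarith [e1, e2, e3, hmain]
end QEMD
end
end
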